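/- The ring R = Z_4[Y]/(Y^2), with its Z_2-grading given by R_0 = Z_4 and R_1 = Z_4·Y, is an EM-Z_2-graded ring; that is, every nonzero homogeneous zero-divisor polynomial in R[x] has an annihilating content. -/

import Mathlib

open Polynomial
open TrivSqZeroExt

private def φA : DualNumber (ZMod 4) → DualNumber (ZMod 4) :=
  fun a => if a.fst = 2 then 1 else 0

private lemma φA0 : φA 0 = 0 := if_neg (by decide)

private def φB : DualNumber (ZMod 4) → DualNumber (ZMod 4) :=
  fun a => if a.snd = 2 then 1 else 0

private lemma φB0 : φB 0 = 0 := if_neg (by decide)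

private def φC : DualNumber (ZMod 4) → DualNumber (ZMod 4) :=
  fun a => inl a.snd

private lemma φC0 : φC 0 = 0 := by simp [φC]

private lemma k1 : ∀ u : ZMod 4, 2 * u ≠ 0 → ∀ a : ZMod 4, a * u = 0 → a = 0 := by decide
private lemma k2 : ∀ u : ZMod 4, 2 * u = 0 → u ≠ 2 → u = 0 := by decide
private lemma k3 : ∀ a : ZMod 4, a * 1 = 0 → a = 0 := by decide

private lemma dn_mul_fst_snd (x y : DualNumber (ZMod 4)) :
    (x*y).fst = x.fst * y.fst ∧ (x*y).snd = x.fst * y.snd + y.fst * x.snd := by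
  constructor
  · rfl
  · show x.fst • y.snd + MulOpposite.op y.fst • x.snd = _
    simp [smul_eq_mul, MulOpposite.smul_eq_mul_unop]; ring

private lemma reg_of_coeff (g : Polynomial (DualNumber (ZMod 4))) (i : ℕ)
    (h : ∀ a : ZMod 4, a * (g.coeff i).fst = 0 → a = 0) :
    g ∈ nonZeroDivisors (Polynomial (DualNumber (ZMod 4))) := by
  rw [Polynomial.mem_nonZeroDivisors_iff]
  intro a ha
  have h0 : a * g.coeff i = 0 := by
    have := congrArg (fun p => p.coeff i) ha
    simpa [Polynomial.coeff_smul, smul_eq_mul] using this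
  obtain ⟨e1, e2⟩ := dn_mul_fst_snd a (g.coeff i)
  rw [h0] at e1 e2
  have ha1 : a.fst = 0 := h _ e1.symm
  have ha2 : a.snd = 0 := by
    apply h
    rw [mul_comm]
    have := e2.symm
    rwa [ha1, zero_mul, zero_add] at this
  exact TrivSqZeroExt.ext ha1 ha2

private noncomputable def mapCoeffs (φ : DualNumber (ZMod 4) → DualNumber (ZMod 4))
    (hφ : φ 0 = 0) (f : Polynomial (DualNumber (ZMod 4))) :
    Polynomial (DualNumber (ZMod 4)) :=
  ⟨⟨Finsupp.mapRange φ hφ f.toFinsupp.coeff⟩⟩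

private lemma coeff_mapCoeffs (φ : DualNumber (ZMod 4) → DualNumber (ZMod 4))
    (hφ : φ 0 = 0) (f : Polynomial (DualNumber (ZMod 4))) (n : ℕ) :
    (mapCoeffs φ hφ f).coeff n = φ (f.coeff n) := by
  simp [mapCoeffs, coeff_ofFinsupp, Finsupp.mapRange_apply, Polynomial.coeff]

private lemma inl2_ne : (inl 2 : DualNumber (ZMod 4)) ≠ 0 := by
  intro h
  have := congrArg TrivSqZeroExt.fst h
  rw [fst_inl] at this
  exact absurd this (by decide)

private lemma inr1_ne : (inr 1 : DualNumber (ZMod 4)) ≠ 0 := by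
  intro h
  have := congrArg TrivSqZeroExt.snd h
  rw [snd_inr] at this
  exact absurd this (by decide)



/-- The ring `R = Z₄[Y]/(Y²)` (realized as the dual numbers over `ZMod 4`),
with its `Z₂`-grading `R₀ = Z₄` (elements `a + 0·Y`) and `R₁ = Z₄·Y` (elements `0 + b·Y`),
is an EM-`Z₂`-graded ring: every nonzero homogeneous zero-divisor polynomial in `R[x]`
has an annihilating content. -/
theorem stmt_5 :
    ∀ f : Polynomial (DualNumber (ZMod 4)), f ≠ 0 →
      ((∀ i, (f.coeff i).snd = 0) ∨ (∀ i, (f.coeff i).fst = 0)) →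
      f ∉ nonZeroDivisors (Polynomial (DualNumber (ZMod 4))) →
      ∃ (c : DualNumber (ZMod 4)) (g : Polynomial (DualNumber (ZMod 4))),
        c ∉ nonZeroDivisors (DualNumber (ZMod 4)) ∧
        g ∈ nonZeroDivisors (Polynomial (DualNumber (ZMod 4))) ∧
        f = C c * g := by
  intro f hf0 hhom hfzd
  obtain ⟨j, hj⟩ : ∃ j, f.coeff j ≠ 0 := by
    by_contra h
    push_neg at h
    exact hf0 (Polynomial.ext fun n => by simp [h n])
  rcases hhom with hA | hB
  · -- all coefficients of the form (a, 0)
    by_cases hev : ∀ i, 2 * (f.coeff i).fst = 0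
    · -- all fst ∈ {0, 2}; take c = 2
      have hfj : (f.coeff j).fst = 2 := by
        by_contra hne
        exact hj (TrivSqZeroExt.ext (k2 _ (hev j) hne) (hA j))
      refine ⟨inl 2, mapCoeffs φA φA0 f, ?_, ?_, ?_⟩
      · intro hc
        exact inl2_ne (hc.2 (inl 2) (by rw [inl_mul_inl]; exact congrArg inl (by decide)))
      · apply reg_of_coeff _ j
        rw [coeff_mapCoeffs]
        show ∀ a : ZMod 4, a * (if (f.coeff j).fst = 2 then (1 : DualNumber (ZMod 4)) else 0).fst = 0 → a = 0
        rw [if_pos hfj]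
        intro a ha
        exact k3 a (by simpa using ha)
      · refine Polynomial.ext fun n => ?_
        rw [coeff_C_mul, coeff_mapCoeffs]
        show f.coeff n = inl 2 * (if (f.coeff n).fst = 2 then (1 : DualNumber (ZMod 4)) else 0)
        by_cases h : (f.coeff n).fst = 2
        · rw [if_pos h, mul_one]
          exact TrivSqZeroExt.ext (by rw [h, fst_inl]) (by rw [hA n, snd_inl])
        · rw [if_neg h, mul_zero]
          exact TrivSqZeroExt.ext (k2 _ (hev n) h) (hA n)
    · push_neg at hev
      obtain ⟨i, hi⟩ := hev
      exact absurd (reg_of_coeff f i (k1 _ hi)) hfzd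
  · -- all coefficients of the form (0, b)
    by_cases hev : ∀ i, 2 * (f.coeff i).snd = 0
    · -- all snd ∈ {0, 2}; take c = 2ε = inr 2
      have hfj : (f.coeff j).snd = 2 := by
        by_contra hne
        exact hj (TrivSqZeroExt.ext (hB j) (k2 _ (hev j) hne))
      refine ⟨inr 2, mapCoeffs φB φB0 f, ?_, ?_, ?_⟩
      · intro hc
        exact inr1_ne (hc.2 (inr 1) (inr_mul_inr _ _ _))
      · apply reg_of_coeff _ j
        rw [coeff_mapCoeffs]
        show ∀ a : ZMod 4, a * (if (f.coeff j).snd = 2 then (1 : DualNumber (ZMod 4)) else 0).fst = 0 → a = 0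
        rw [if_pos hfj]
        intro a ha
        exact k3 a (by simpa using ha)
      · refine Polynomial.ext fun n => ?_
        rw [coeff_C_mul, coeff_mapCoeffs]
        show f.coeff n = inr 2 * (if (f.coeff n).snd = 2 then (1 : DualNumber (ZMod 4)) else 0)
        by_cases h : (f.coeff n).snd = 2
        · rw [if_pos h, mul_one]
          exact TrivSqZeroExt.ext (by rw [hB n, fst_inr]) (by rw [h, snd_inr])
        · rw [if_neg h, mul_zero]
          exact TrivSqZeroExt.ext (hB n) (k2 _ (hev n) h)
    · push_neg at hev
      obtain ⟨i, hi⟩ := hev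
      refine ⟨inr 1, mapCoeffs φC φC0 f, ?_, ?_, ?_⟩
      · intro hc
        exact inr1_ne (hc.2 (inr 1) (inr_mul_inr _ _ _))
      · apply reg_of_coeff _ i
        rw [coeff_mapCoeffs]
        show ∀ a : ZMod 4, a * (inl (f.coeff i).snd : DualNumber (ZMod 4)).fst = 0 → a = 0
        rw [fst_inl]
        exact k1 _ hi
      · refine Polynomial.ext fun n => ?_
        rw [coeff_C_mul, coeff_mapCoeffs]
        show f.coeff n = inr 1 * (inl (f.coeff n).snd : DualNumber (ZMod 4))
        rw [inr_mul_inl]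
        refine TrivSqZeroExt.ext (by rw [hB n, fst_inr]) ?_
        rw [snd_inr]
        show _ = MulOpposite.op (f.coeff n).snd • (1 : ZMod 4)
        simp [MulOpposite.smul_eq_mul_unop]
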